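/- Let X_free ⊆ [0,1]^d have measure μ(X_free) and fix θ > 0, γ > 0 with γ^d ζ_d / ((2+θ)^d μ(X_free)) > 1/d, where ζ_d is the volume of the unit d-ball. Let r_n = γ(log n / n)^{1/d}, and suppose M_n ≤ C/r_n for a constant C > 0. If n points are sampled i.i.d. uniformly on X_free, then the probability that at least one of M_n disjoint-or-not balls of radius r_n/(2+θ) contained in X_free is empty of samples tends to 0 as n → ∞. -/

import Mathlib

open MeasureTheory ProbabilityTheory

/-- Lemma 3 (loose approximation to all of the path): with `r_n = γ(log n/n)^{1/d}`
and `γ^d ζ_d / ((2+θ)^d μ(Xfree)) > 1/d`, if `n` points are sampled i.i.d.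
uniformly on `Xfree` and `M_n ≤ C/r_n` balls of radius `r_n/(2+θ)` are contained
in `Xfree`, then the probability that at least one ball contains no sample tends
to `0` as `n → ∞`. -/
theorem lemma3_loose_approximation {d : ℕ} (hd : 2 ≤ d)
    {Ω : Type*} [MeasureSpace Ω] [IsProbabilityMeasure (ℙ : Measure Ω)]
    (Xfree : Set (EuclideanSpace ℝ (Fin d))) (hXmeas : MeasurableSet Xfree)
    (hXsub : Xfree ⊆ {x | ∀ i, x i ∈ Set.Icc (0 : ℝ) 1}) (hpos : 0 < volume Xfree)
    (θ γ C : ℝ) (hθ : 0 < θ) (hγ : 0 < γ) (hC : 0 < C)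
    (ζ : ℝ) (hζ : ζ = (volume (Metric.ball (0 : EuclideanSpace ℝ (Fin d)) 1)).toReal)
    (hexp : 1 / (d : ℝ) < γ ^ d * ζ / ((2 + θ) ^ d * (volume Xfree).toReal))
    (r : ℕ → ℝ) (hr : ∀ n : ℕ, r n = γ * (Real.log n / n) ^ ((1 : ℝ) / d))
    (M : ℕ → ℕ) (hM : ∀ n : ℕ, 2 ≤ n → (M n : ℝ) ≤ C / r n)
    (cB : ℕ → ℕ → EuclideanSpace ℝ (Fin d))
    (hball : ∀ n : ℕ, 2 ≤ n → ∀ m < M n,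
      Metric.ball (cB n m) (r n / (2 + θ)) ⊆ Xfree)
    (Y : ℕ → Ω → EuclideanSpace ℝ (Fin d))
    (hmeas : ∀ i, Measurable (Y i))
    (hindep : iIndepFun Y ℙ)
    (hunif : ∀ i, Measure.map (Y i) ℙ = (volume Xfree)⁻¹ • volume.restrict Xfree) :
    Filter.Tendsto
      (fun n : ℕ => ℙ {ω | ∃ m < M n, ∀ i < n, Y i ω ∉ Metric.ball (cB n m) (r n / (2 + θ))})
      Filter.atTop (nhds 0) := by
  have hθ2 : (0:ℝ) < 2 + θ := by linarith
  have hdR : (0:ℝ) < (d:ℝ) := by exact_mod_cast (by omega : 0 < d)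
  have hdne : (d:ℝ) ≠ 0 := hdR.ne'
  -- finiteness of the volume of Xfree
  have hfin : volume Xfree ≠ ⊤ := by
    have h1 : volume {x : EuclideanSpace ℝ (Fin d) | ∀ i, x i ∈ Set.Icc (0:ℝ) 1} = 1 := by
      have hpre : ((MeasurableEquiv.toLp 2 (Fin d → ℝ)).symm) ⁻¹'
          (Set.univ.pi fun _ => Set.Icc (0:ℝ) 1)
          = {x : EuclideanSpace ℝ (Fin d) | ∀ i, x i ∈ Set.Icc (0:ℝ) 1} := by
        ext x
        simp only [Set.mem_preimage, Set.mem_pi, Set.mem_univ, forall_true_left,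
          Set.mem_setOf_eq]
        exact ⟨fun h i => h i, fun h i => h i⟩
      rw [← hpre, (EuclideanSpace.volume_preserving_symm_measurableEquiv_toLp (Fin d)).measure_preimage
        (MeasurableSet.univ_pi (fun _ => measurableSet_Icc)).nullMeasurableSet,
        volume_pi_pi]
      simp [Real.volume_Icc]
    exact ne_top_of_le_ne_top (by rw [h1]; exact ENNReal.one_ne_top) (measure_mono hXsub)
  set V : ℝ := (volume Xfree).toReal with hVdef
  have hV : 0 < V := ENNReal.toReal_pos hpos.ne' hfin
  set a : ℝ := γ ^ d * ζ / ((2 + θ) ^ d * V) with hadef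
  have ha : 1 / (d:ℝ) < a := hexp
  have hapos : 0 < a := lt_trans (by positivity) ha
  have hζball : volume (Metric.ball (0 : EuclideanSpace ℝ (Fin d)) 1) ≠ ⊤ :=
    measure_ball_lt_top.ne
  -- key bound
  have key : ∀ n : ℕ, 3 ≤ n →
      ℙ {ω | ∃ m < M n, ∀ i < n, Y i ω ∉ Metric.ball (cB n m) (r n / (2 + θ))}
        ≤ ENNReal.ofReal ((C / γ) * (n : ℝ) ^ (1 / (d:ℝ) - a)) := by
    intro n hn3
    have hn2 : 2 ≤ n := by omega
    have hnR : (0:ℝ) < n := by exact_mod_cast (by omega : 0 < n)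
    by_cases hM0 : M n = 0
    · have hempty : {ω | ∃ m < M n, ∀ i < n,
          Y i ω ∉ Metric.ball (cB n m) (r n / (2 + θ))} = (∅ : Set Ω) := by
        ext ω; simp [hM0]
      rw [hempty]; simp
    have hM1 : 0 < M n := Nat.pos_of_ne_zero hM0
    set ρ : ℝ := r n / (2 + θ) with hρ
    have hlogn : 1 ≤ Real.log n := by
      rw [Real.le_log_iff_exp_le hnR]
      calc Real.exp 1 ≤ 2.7182818286 := Real.exp_one_lt_d9.le
        _ ≤ (n:ℝ) := by
            have : (3:ℝ) ≤ n := by exact_mod_cast hn3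
            linarith
    have hql : 0 < Real.log n / n := by positivity
    have hrpos : 0 < r n := by
      rw [hr]; exact mul_pos hγ (Real.rpow_pos_of_pos hql _)
    have hρpos : 0 < ρ := div_pos hrpos hθ2
    -- volume of the balls
    haveI : Nonempty (Fin d) := ⟨⟨0, by omega⟩⟩
    haveI : Nontrivial (EuclideanSpace ℝ (Fin d)) :=
      ⟨0, EuclideanSpace.single ⟨0, by omega⟩ (1:ℝ), by
        intro h
        have := congrArg (fun v : EuclideanSpace ℝ (Fin d) => v ⟨0, by omega⟩) h.symm
        simp [EuclideanSpace.single_apply] at this⟩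
    have hballvol : ∀ m : ℕ, volume (Metric.ball (cB n m) ρ)
        = ENNReal.ofReal (ρ ^ d) * volume (Metric.ball (0 : EuclideanSpace ℝ (Fin d)) 1) := by
      intro m
      rw [Measure.addHaar_ball volume _ hρpos.le, finrank_euclideanSpace_fin]
    set p : ENNReal := (volume Xfree)⁻¹ *
      (ENNReal.ofReal (ρ ^ d) * volume (Metric.ball (0 : EuclideanSpace ℝ (Fin d)) 1)) with hp
    have hple : p ≤ 1 := by
      rw [hp, ← hballvol 0]
      calc (volume Xfree)⁻¹ * volume (Metric.ball (cB n 0) ρ)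
          ≤ (volume Xfree)⁻¹ * volume Xfree :=
            mul_le_mul_right (measure_mono (hball n hn2 0 hM1)) _
        _ = 1 := ENNReal.inv_mul_cancel hpos.ne' hfin
    have hpfin : p ≠ ⊤ := (lt_of_le_of_lt hple ENNReal.one_lt_top).ne
    -- per-point probability
    have hprob : ∀ i : ℕ, ∀ m < M n,
        ℙ ((Y i) ⁻¹' (Metric.ball (cB n m) ρ)ᶜ) = 1 - p := by
      intro i m hm
      have hBm : MeasurableSet (Metric.ball (cB n m) ρ) := measurableSet_ball
      have h1 : ℙ ((Y i) ⁻¹' Metric.ball (cB n m) ρ) = p := by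
        rw [← Measure.map_apply (hmeas i) hBm, hunif i, Measure.smul_apply, smul_eq_mul,
          Measure.restrict_apply hBm, Set.inter_eq_left.mpr (hball n hn2 m hm), hballvol m, hp]
      rw [Set.preimage_compl, prob_compl_eq_one_sub ((hmeas i) hBm), h1]
    -- independence
    have hinter : ∀ m < M n,
        ℙ (⋂ i ∈ Finset.range n, (Y i) ⁻¹' (Metric.ball (cB n m) ρ)ᶜ) = (1 - p) ^ n := by
      intro m hm
      rw [hindep.meas_biInter
        (fun i _ => ⟨(Metric.ball (cB n m) ρ)ᶜ, measurableSet_ball.compl, rfl⟩),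
        Finset.prod_congr rfl (fun i _ => hprob i m hm), Finset.prod_const, Finset.card_range]
    -- union bound
    have hset : {ω | ∃ m < M n, ∀ i < n, Y i ω ∉ Metric.ball (cB n m) (r n / (2 + θ))}
        = ⋃ m ∈ Finset.range (M n),
            ⋂ i ∈ Finset.range n, (Y i) ⁻¹' (Metric.ball (cB n m) ρ)ᶜ := by
      ext ω
      simp [Set.mem_iUnion, Set.mem_iInter, hρ]
    -- p.toReal facts
    have hpR1 : p.toReal ≤ 1 := by
      have := ENNReal.toReal_mono ENNReal.one_ne_top hple
      simpa using this
    have h1p : (1:ENNReal) - p = ENNReal.ofReal (1 - p.toReal) := by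
      rw [ENNReal.ofReal_sub _ ENNReal.toReal_nonneg, ENNReal.ofReal_one,
        ENNReal.ofReal_toReal hpfin]
    have hexpb : (1 - p) ^ n ≤ ENNReal.ofReal (Real.exp (-((n:ℝ) * p.toReal))) := by
      rw [h1p, ← ENNReal.ofReal_pow (by linarith)]
      apply ENNReal.ofReal_le_ofReal
      calc (1 - p.toReal) ^ n ≤ (Real.exp (-p.toReal)) ^ n := by
            apply pow_le_pow_left₀ (by linarith)
            linarith [Real.add_one_le_exp (-p.toReal)]
        _ = Real.exp (-((n:ℝ) * p.toReal)) := by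
            rw [← Real.exp_nat_mul]; ring_nf
    have hMle : (M n : ENNReal) ≤ ENNReal.ofReal (C / r n) := by
      rw [← ENNReal.ofReal_natCast]
      exact ENNReal.ofReal_le_ofReal (hM n hn2)
    -- real computations
    have hpR : p.toReal = ρ ^ d * ζ / V := by
      rw [hp, ENNReal.toReal_mul, ENNReal.toReal_mul, ENNReal.toReal_inv,
        ENNReal.toReal_ofReal (by positivity), hζ, hVdef]
      ring
    have hrd : r n ^ d = γ ^ d * (Real.log n / n) := by
      rw [hr, mul_pow, ← Real.rpow_natCast ((Real.log ↑n / ↑n) ^ ((1:ℝ)/d)) d,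
        ← Real.rpow_mul hql.le, one_div, inv_mul_cancel₀ hdne, Real.rpow_one]
    have hnpR : (n:ℝ) * p.toReal = a * Real.log n := by
      rw [hpR, hρ, div_pow, hrd, hadef]
      field_simp
    have hexpval : Real.exp (-((n:ℝ) * p.toReal)) = (n:ℝ) ^ (-a) := by
      rw [hnpR, Real.rpow_def_of_pos hnR]
      ring_nf
    have hrb : C / r n ≤ (C / γ) * (n:ℝ) ^ ((1:ℝ)/d) := by
      have hrlow : γ * (n:ℝ) ^ (-((1:ℝ)/d)) ≤ r n := by
        rw [hr, Real.rpow_neg hnR.le, ← Real.inv_rpow hnR.le]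
        have h4 : (n:ℝ)⁻¹ ≤ Real.log ↑n / ↑n := by
          rw [inv_eq_one_div]
          gcongr
        exact mul_le_mul_of_nonneg_left
          (Real.rpow_le_rpow (inv_nonneg.mpr hnR.le) h4 (by positivity)) hγ.le
      have h2 : 0 < γ * (n:ℝ) ^ (-((1:ℝ)/d)) := by positivity
      calc C / r n ≤ C / (γ * (n:ℝ) ^ (-((1:ℝ)/d))) := by
            apply div_le_div_of_nonneg_left hC.le h2 hrlow
        _ = (C / γ) * (n:ℝ) ^ ((1:ℝ)/d) := by
            rw [Real.rpow_neg hnR.le]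
            have h3 : (n:ℝ) ^ ((1:ℝ)/d) ≠ 0 := (Real.rpow_pos_of_pos hnR _).ne'
            field_simp
      -- end hrb
    calc ℙ {ω | ∃ m < M n, ∀ i < n, Y i ω ∉ Metric.ball (cB n m) (r n / (2 + θ))}
        ≤ ∑ m ∈ Finset.range (M n),
            ℙ (⋂ i ∈ Finset.range n, (Y i) ⁻¹' (Metric.ball (cB n m) ρ)ᶜ) := by
          rw [hset]; exact measure_biUnion_finset_le _ _
      _ = (M n : ENNReal) * (1 - p) ^ n := by
          rw [Finset.sum_congr rfl (fun m hm => hinter m (Finset.mem_range.mp hm)),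
            Finset.sum_const, Finset.card_range, nsmul_eq_mul]
      _ ≤ ENNReal.ofReal (C / r n) * ENNReal.ofReal (Real.exp (-((n:ℝ) * p.toReal))) :=
          mul_le_mul' hMle hexpb
      _ = ENNReal.ofReal ((C / r n) * Real.exp (-((n:ℝ) * p.toReal))) :=
          (ENNReal.ofReal_mul (by positivity)).symm
      _ ≤ ENNReal.ofReal ((C / γ) * (n : ℝ) ^ (1 / (d:ℝ) - a)) := by
          apply ENNReal.ofReal_le_ofReal
          rw [hexpval]
          calc (C / r n) * (n:ℝ) ^ (-a)
              ≤ ((C / γ) * (n:ℝ) ^ ((1:ℝ)/d)) * (n:ℝ) ^ (-a) := by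
                apply mul_le_mul_of_nonneg_right hrb (Real.rpow_nonneg hnR.le _)
            _ = (C / γ) * (n : ℝ) ^ (1 / (d:ℝ) - a) := by
                rw [mul_assoc, ← Real.rpow_add hnR, sub_eq_add_neg]
  -- the bound tends to zero
  have hg : Filter.Tendsto (fun n : ℕ => ENNReal.ofReal ((C / γ) * (n : ℝ) ^ (1 / (d:ℝ) - a)))
      Filter.atTop (nhds 0) := by
    rw [← ENNReal.ofReal_zero]
    apply ENNReal.tendsto_ofReal
    have heq : (1 / (d:ℝ) - a) = -(a - 1 / d) := by ring
    have h0 : Filter.Tendsto (fun x : ℝ => (C / γ) * x ^ (-(a - 1 / (d:ℝ))))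
        Filter.atTop (nhds ((C / γ) * 0)) :=
      (tendsto_rpow_neg_atTop (by linarith)).const_mul _
    have := h0.comp (tendsto_natCast_atTop_atTop (R := ℝ))
    simpa [heq, Function.comp_def] using this
  apply tendsto_of_tendsto_of_tendsto_of_le_of_le' tendsto_const_nhds hg
  · exact Filter.Eventually.of_forall (fun n => zero_le)
  · filter_upwards [Filter.eventually_ge_atTop 3] with n hn using key n hn
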